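/- arXiv:1803.08964 — 4 statements merged into one kernel-verified Lean document; each statement's English description precedes it below -/
import Mathlib

section
/- For Re(s) > 1, complex z, and y ≥ 2, the Dirichlet series ∑_{n≥1} z^{ω_y(n)} n^{−s} equals ζ(s) · ∏_{p < y} (1 + (z−1) p^{−s}), where the product runs over primes p < y. -/
open Finset

/-- `omegaY y n` : number of distinct prime factors of `n` that are `< y`. -/
noncomputable def omegaY (y : ℝ) (n : ℕ) : ℕ :=
  (n.primeFactors.filter (fun p : ℕ => (p : ℝ) < y)).card

private lemma natCast_prod_cpow (s : ℂ) (S : Finset ℕ) :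
    ((∏ p ∈ S, p : ℕ) : ℂ) ^ s = ∏ p ∈ S, (p : ℂ) ^ s := by
  classical
  induction S using Finset.induction_on with
  | empty => simp
  | @insert a S ha ih =>
    rw [Finset.prod_insert ha, Finset.prod_insert ha, ← ih, Nat.cast_mul,
      Complex.natCast_mul_natCast_cpow]

open LSeries Complex in
open scoped LSeries.notation in
/-- For `Re s > 1`, `z ∈ ℂ` and `y ≥ 2`, the Dirichlet series of `n ↦ z^{ω_y(n)}`
equals `ζ(s) · ∏_{p < y} (1 + (z-1) p^{-s})`, the product over primes `p < y`. -/
theorem stmt_2 (s z : ℂ) (hs : 1 < s.re) (y : ℝ) (hy : 2 ≤ y) :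
    ∑' n : ℕ, (if n = 0 then 0 else z ^ omegaY y n / (n : ℂ) ^ s) =
      riemannZeta s *
        ∏ p ∈ (Finset.range ⌈y⌉₊).filter
            (fun p : ℕ => p.Prime ∧ (p : ℝ) < y),
          (1 + (z - 1) / (p : ℂ) ^ s) := by
  classical
  set P : Finset ℕ := (Finset.range ⌈y⌉₊).filter (fun p : ℕ => p.Prime ∧ (p : ℝ) < y) with hP
  have hPprime : ∀ p ∈ P, p.Prime := fun p hp => (Finset.mem_filter.mp hp).2.1
  set h : ℕ → ℂ := fun d =>
    ∑ S ∈ P.powerset, if d = ∏ p ∈ S, p then (z - 1) ^ S.card else 0 with hh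
  -- the finite support of `h`
  set T : Finset ℕ := P.powerset.image (fun S => ∏ p ∈ S, p) with hT
  have hTne : ∀ n ∈ T, n ≠ 0 := by
    intro n hn
    obtain ⟨S, hS, rfl⟩ := Finset.mem_image.mp hn
    exact (Finset.prod_pos fun p hp =>
      (hPprime p (Finset.mem_powerset.mp hS hp)).pos).ne'
  have hsupp : ∀ n : ℕ, n ∉ T → h n = 0 := by
    intro n hn
    refine Finset.sum_eq_zero fun S hS => ?_
    rw [if_neg]
    rintro rfl
    exact hn (Finset.mem_image_of_mem _ hS)
  have hterm_supp : ∀ n : ℕ, n ∉ T → term h s n = 0 := by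
    intro n hn
    rcases eq_or_ne n 0 with rfl | hn0
    · exact term_zero ..
    · rw [term_of_ne_zero hn0, hsupp n hn, zero_div]
  have hhsum : LSeriesSummable h s := summable_of_ne_finset_zero hterm_supp
  have h1sum : LSeriesSummable 1 s := LSeriesSummable_one_iff.mpr hs
  -- `h ⍟ 1 = z ^ omegaY y ·` away from 0
  have hconv : ∀ {n : ℕ}, n ≠ 0 → (h ⍟ 1) n = z ^ omegaY y n := by
    intro n hn
    set Q : Finset ℕ := n.primeFactors.filter (fun p : ℕ => (p : ℝ) < y) with hQ
    have hps : P.powerset.filter (fun S => (∏ p ∈ S, p) ∣ n) = Q.powerset := by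
      ext S
      simp only [Finset.mem_filter, Finset.mem_powerset]
      constructor
      · rintro ⟨hSP, hdvd⟩ p hp
        have hpP := hSP hp
        have hprime := hPprime p hpP
        have hpy : (p : ℝ) < y := (Finset.mem_filter.mp hpP).2.2
        have hpn : p ∣ n := (Finset.dvd_prod_of_mem _ hp).trans hdvd
        exact Finset.mem_filter.mpr ⟨Nat.mem_primeFactors.mpr ⟨hprime, hpn, hn⟩, hpy⟩
      · intro hSQ
        have hSP : S ⊆ P := by
          intro p hp
          have := hSQ hp
          rw [hQ, Finset.mem_filter] at this
          obtain ⟨hpf, hpy⟩ := this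
          have hprime := Nat.prime_of_mem_primeFactors hpf
          exact Finset.mem_filter.mpr ⟨Finset.mem_range.mpr (Nat.lt_ceil.mpr hpy),
            hprime, hpy⟩
        refine ⟨hSP, Finset.prod_primes_dvd n (fun p hp => ?_) (fun p hp => ?_)⟩
        · exact (hPprime p (hSP hp)).prime
        · exact Nat.dvd_of_mem_primeFactors (Finset.mem_filter.mp (hSQ hp)).1
    rw [convolution_def]
    simp only [Pi.one_apply, mul_one]
    rw [Nat.sum_divisorsAntidiagonal (fun a _ => h a), hh]
    calc (∑ d ∈ n.divisors, ∑ S ∈ P.powerset,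
          if d = ∏ p ∈ S, p then (z - 1) ^ S.card else 0)
        = ∑ S ∈ P.powerset, ∑ d ∈ n.divisors,
            if d = ∏ p ∈ S, p then (z - 1) ^ S.card else 0 := Finset.sum_comm
      _ = ∑ S ∈ P.powerset, if (∏ p ∈ S, p) ∣ n then (z - 1) ^ S.card else 0 := by
          refine Finset.sum_congr rfl fun S hS => ?_
          rw [Finset.sum_ite_eq' n.divisors (∏ p ∈ S, p) (fun _ => (z - 1) ^ S.card)]
          congr 1
          simp [Nat.mem_divisors, hn]
      _ = ∑ S ∈ P.powerset.filter (fun S => (∏ p ∈ S, p) ∣ n), (z - 1) ^ S.card := by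
          rw [Finset.sum_filter]
      _ = ∑ S ∈ Q.powerset, (z - 1) ^ S.card := by rw [hps]
      _ = z ^ omegaY y n := by
          have := Finset.prod_add (fun _ : ℕ => z - 1) (fun _ : ℕ => 1) Q
          simp only [Finset.prod_const, one_pow, mul_one] at this
          rw [sub_add_cancel] at this
          rw [omegaY]
          rw [show n.primeFactors.filter (fun p : ℕ => (p : ℝ) < y) = Q from rfl]
          exact this.symm
  -- compute `LSeries h s`
  have hLh : LSeries h s = ∏ p ∈ P, (1 + (z - 1) / (p : ℂ) ^ s) := by
    rw [LSeries, tsum_eq_sum hterm_supp]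
    calc (∑ n ∈ T, term h s n)
        = ∑ n ∈ T, ∑ S ∈ P.powerset,
            if n = ∏ p ∈ S, p then (z - 1) ^ S.card / ((∏ p ∈ S, p : ℕ) : ℂ) ^ s
            else 0 := by
          refine Finset.sum_congr rfl fun n hn => ?_
          rw [term_of_ne_zero (hTne n hn), hh, Finset.sum_div]
          refine Finset.sum_congr rfl fun S hS => ?_
          split_ifs with hd
          · rw [hd]
          · exact zero_div _
      _ = ∑ S ∈ P.powerset, (z - 1) ^ S.card / ((∏ p ∈ S, p : ℕ) : ℂ) ^ s := by
          rw [Finset.sum_comm]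
          refine Finset.sum_congr rfl fun S hS => ?_
          rw [Finset.sum_ite_eq' T (∏ p ∈ S, p)
            (fun _ => (z - 1) ^ S.card / ((∏ p ∈ S, p : ℕ) : ℂ) ^ s),
            if_pos (Finset.mem_image_of_mem _ hS)]
      _ = ∑ S ∈ P.powerset, ∏ p ∈ S, ((z - 1) / (p : ℂ) ^ s) := by
          refine Finset.sum_congr rfl fun S hS => ?_
          rw [Finset.prod_div_distrib, Finset.prod_const, natCast_prod_cpow]
      _ = ∏ p ∈ P, (1 + (z - 1) / (p : ℂ) ^ s) := by
          have := Finset.prod_add (fun p : ℕ => (z - 1) / (p : ℂ) ^ s)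
            (fun _ : ℕ => (1 : ℂ)) P
          simp only [one_pow, Finset.prod_const_one, mul_one] at this
          rw [← this]
          exact Finset.prod_congr rfl fun p _ => add_comm _ _
  have key : (fun n : ℕ => if n = 0 then 0 else z ^ omegaY y n / (n : ℂ) ^ s) =
      term (fun n => z ^ omegaY y n) s := by
    ext n
    rw [term_def]
  rw [key]
  have : LSeries (fun n => z ^ omegaY y n) s = LSeries (h ⍟ 1) s :=
    LSeries_congr (s := s) fun {n} hn => (hconv hn).symm
  calc ∑' n, term (fun n => z ^ omegaY y n) s n
      = LSeries (h ⍟ 1) s := this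
    _ = LSeries h s * LSeries 1 s := LSeries_convolution' hhsum h1sum
    _ = riemannZeta s * ∏ p ∈ P, (1 + (z - 1) / (p : ℂ) ^ s) := by
        rw [hLh, LSeries_one_eq_riemannZeta hs, mul_comm]
end

section
/- If R > 0, |z| ≤ R, Re(s) ≥ 1, and y ≥ 3, then |∏_{p<y}(1 + (z−1)/p^s)| ≪_R (log y)^{|z−1|}. -/
open Finset

private def Pb (N : ℕ) : Finset ℕ := (range N).filter Nat.Prime

private lemma cheb (N : ℕ) : ∑ p ∈ Pb (N+1), Real.log p ≤ (N+1) * Real.log 4 := by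
  have h0 : ∀ p ∈ Pb (N+1), (p:ℝ) ≠ 0 := by
    intro p hp
    simp only [Pb, mem_filter] at hp
    exact_mod_cast hp.2.pos.ne'
  have h1 : ∑ p ∈ Pb (N+1), Real.log p = Real.log (∏ p ∈ Pb (N+1), (p:ℝ)) :=
    (Real.log_prod h0).symm
  have h2 : (∏ p ∈ Pb (N+1), (p:ℝ)) = ((primorial N : ℕ) : ℝ) := by
    rw [primorial, Nat.cast_prod]; rfl
  rw [h1, h2]
  have h3 : ((primorial N : ℕ) : ℝ) ≤ ((4:ℝ) ^ N) := by
    have := primorial_le_4_pow N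
    calc ((primorial N : ℕ) : ℝ) ≤ ((4^N : ℕ) : ℝ) := by exact_mod_cast this
      _ = (4:ℝ)^N := by push_cast; ring
  calc Real.log (primorial N) ≤ Real.log ((4:ℝ)^N) := by
        apply Real.log_le_log (by exact_mod_cast primorial_pos N) h3
    _ = N * Real.log 4 := by rw [Real.log_pow]
    _ ≤ (N+1) * Real.log 4 := by
        have : (0:ℝ) ≤ Real.log 4 := Real.log_nonneg (by norm_num)
        nlinarith

private lemma legendre_dvd (N : ℕ) : (∏ p ∈ Pb (N+1), p ^ (N / p)) ∣ Nat.factorial N := by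
  have hm0 : (∏ p ∈ Pb (N+1), p ^ (N / p)) ≠ 0 := by
    apply Finset.prod_ne_zero_iff.mpr
    intro p hp
    simp only [Pb, mem_filter] at hp
    exact pow_ne_zero _ hp.2.pos.ne'
  rw [← Nat.factorization_le_iff_dvd hm0 (Nat.factorial_ne_zero N)]
  rw [Nat.factorization_prod (fun p hp => by
    simp only [Pb, mem_filter] at hp; exact pow_ne_zero _ hp.2.pos.ne')]
  intro q
  rw [Finset.sum_apply']
  have hsingle : ∀ p ∈ Pb (N+1), (p ^ (N / p)).factorization q
      = if p = q then N / p else 0 := by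
    intro p hp
    simp only [Pb, mem_filter] at hp
    rw [hp.2.factorization_pow, Finsupp.single_apply]
  rw [Finset.sum_congr rfl hsingle, Finset.sum_ite_eq' (Pb (N+1)) q (fun p => N / p)]
  by_cases hq : q ∈ Pb (N+1)
  · simp only [hq, if_true]
    simp only [Pb, mem_filter, mem_range] at hq
    haveI : Fact q.Prime := ⟨hq.2⟩
    have hqN : q ≤ N := by omega
    rw [Nat.factorization_def _ hq.2,
      padicValNat_factorial (b := Nat.log q N + 1) (Nat.lt_succ_self _)]
    have h1 : 1 ∈ Finset.Ico 1 (Nat.log q N + 1) := by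
      simp only [Finset.mem_Ico]
      exact ⟨le_rfl, by have := Nat.log_pos hq.2.one_lt hqN; omega⟩
    calc N / q = N / q ^ 1 := by rw [pow_one]
      _ ≤ ∑ i ∈ Finset.Ico 1 (Nat.log q N + 1), N / q ^ i :=
        Finset.single_le_sum (f := fun i => N / q ^ i) (fun i _ => Nat.zero_le _) h1
  · simp [hq]
private lemma mert1 {N : ℕ} (hN : 1 ≤ N) :
    ∑ p ∈ Pb (N+1), Real.log p / p ≤ Real.log N + 2 * Real.log 4 := by
  have hNR : (0:ℝ) < N := by exact_mod_cast hN
  have hppos : ∀ p ∈ Pb (N+1), (0:ℝ) < p := by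
    intro p hp; simp only [Pb, mem_filter] at hp; exact_mod_cast hp.2.pos
  have hlognn : ∀ p ∈ Pb (N+1), (0:ℝ) ≤ Real.log p := by
    intro p hp; simp only [Pb, mem_filter] at hp
    exact Real.log_nonneg (by exact_mod_cast hp.2.one_lt.le)
  -- log of the Legendre product
  have hlogm : Real.log ((∏ p ∈ Pb (N+1), p ^ (N / p) : ℕ) : ℝ)
      = ∑ p ∈ Pb (N+1), ((N / p : ℕ) : ℝ) * Real.log p := by
    push_cast
    rw [Real.log_prod]
    · exact Finset.sum_congr rfl fun p hp => by rw [Real.log_pow]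
    · intro p hp
      exact pow_ne_zero _ (hppos p hp).ne'
  -- m ≤ N!
  have hmle : ((∏ p ∈ Pb (N+1), p ^ (N / p) : ℕ) : ℝ) ≤ (Nat.factorial N : ℝ) := by
    exact_mod_cast Nat.le_of_dvd (Nat.factorial_pos N) (legendre_dvd N)
  have hmpos : (0:ℝ) < ((∏ p ∈ Pb (N+1), p ^ (N / p) : ℕ) : ℝ) := by
    have : 0 < (∏ p ∈ Pb (N+1), p ^ (N / p) : ℕ) :=
      Nat.pos_of_ne_zero (Finset.prod_ne_zero_iff.mpr fun p hp => by
        simp only [Pb, mem_filter] at hp; exact pow_ne_zero _ hp.2.pos.ne')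
    exact_mod_cast this
  have hfactle : Real.log (Nat.factorial N : ℝ) ≤ N * Real.log N := by
    calc Real.log (Nat.factorial N : ℝ) ≤ Real.log ((N:ℝ) ^ N) := by
          apply Real.log_le_log (by exact_mod_cast Nat.factorial_pos N)
          exact_mod_cast Nat.factorial_le_pow N
      _ = N * Real.log N := Real.log_pow N N
  -- pointwise:  (N/p) * log p ≤ (⌊N/p⌋ + 1) * log p
  have hpoint : ∀ p ∈ Pb (N+1), (N:ℝ) / p * Real.log p
      ≤ (((N / p : ℕ) : ℝ) + 1) * Real.log p := by
    intro p hp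
    have hp0 := hppos p hp
    have hdiv : (N:ℝ) / p ≤ ((N / p : ℕ) : ℝ) + 1 := by
      rw [div_le_iff₀ hp0]
      have h1 := Nat.div_add_mod N p
      have h2 : N % p < p := Nat.mod_lt _ (by exact_mod_cast hp0)
      have : (N:ℝ) = p * ((N / p : ℕ) : ℝ) + ((N % p : ℕ) : ℝ) := by exact_mod_cast (by omega : N = p * (N/p) + N % p)
      rw [this]
      have : ((N % p : ℕ) : ℝ) ≤ p := by exact_mod_cast h2.le
      nlinarith
    exact mul_le_mul_of_nonneg_right hdiv (hlognn p hp)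
  have hsum : ∑ p ∈ Pb (N+1), (N:ℝ) / p * Real.log p
      ≤ N * Real.log N + (N+1) * Real.log 4 := by
    calc ∑ p ∈ Pb (N+1), (N:ℝ) / p * Real.log p
        ≤ ∑ p ∈ Pb (N+1), (((N / p : ℕ) : ℝ) + 1) * Real.log p :=
          Finset.sum_le_sum hpoint
      _ = (∑ p ∈ Pb (N+1), ((N / p : ℕ) : ℝ) * Real.log p)
          + ∑ p ∈ Pb (N+1), Real.log p := by
          rw [← Finset.sum_add_distrib]; exact Finset.sum_congr rfl fun p _ => by ring
      _ ≤ N * Real.log N + (N+1) * Real.log 4 := by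
          have h1 : (∑ p ∈ Pb (N+1), ((N / p : ℕ) : ℝ) * Real.log p) ≤ N * Real.log N := by
            rw [← hlogm]
            exact (Real.log_le_log hmpos hmle).trans hfactle
          exact add_le_add h1 (cheb N)
  have hrw : ∑ p ∈ Pb (N+1), (N:ℝ) / p * Real.log p
      = N * ∑ p ∈ Pb (N+1), Real.log p / p := by
    rw [Finset.mul_sum]
    exact Finset.sum_congr rfl fun p hp => by field_simp
  rw [hrw] at hsum
  have hlog4 : (0:ℝ) ≤ Real.log 4 := Real.log_nonneg (by norm_num)
  have : (N:ℝ) * ∑ p ∈ Pb (N+1), Real.log p / p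
      ≤ N * (Real.log N + 2 * Real.log 4) := by
    have hN1 : ((N:ℝ)+1) ≤ 2*N := by
      have : (1:ℝ) ≤ N := by exact_mod_cast hN
      linarith
    nlinarith
  exact le_of_mul_le_mul_left (by linarith [this]) hNR
noncomputable def mertB : ℝ :=
  1 + (2*Real.log 4) * (Real.log 3)⁻¹
    + ((2*Real.log 4) * (Real.log (3/2))⁻¹ - Real.log (Real.log (3/2)))

private lemma log4nn : (0:ℝ) ≤ Real.log 4 := Real.log_nonneg (by norm_num)

private lemma log32pos : (0:ℝ) < Real.log (3/2) := Real.log_pos (by norm_num)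

private lemma mertB_nonneg : 0 ≤ mertB := by
  unfold mertB
  have h1 : (0:ℝ) < Real.log 3 := Real.log_pos (by norm_num)
  have h3 : Real.log (Real.log (3/2)) ≤ 0 := by
    apply Real.log_nonpos (le_of_lt log32pos)
    calc Real.log (3/2) ≤ (3:ℝ)/2 - 1 := by
          have := Real.log_le_sub_one_of_pos (x := (3/2:ℝ)) (by norm_num)
          linarith
      _ ≤ 1 := by norm_num
  have h4 : 0 ≤ (2*Real.log 4) * (Real.log 3)⁻¹ := by positivity
  have h5 : 0 ≤ (2*Real.log 4) * (Real.log (3/2))⁻¹ := by positivity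
  linarith

private lemma mert2 {N : ℕ} (hN : 3 ≤ N) :
    ∑ p ∈ Pb (N+1), (1:ℝ)/p ≤ Real.log (Real.log N) + mertB := by
  set c₁ : ℝ := 2 * Real.log 4 with hc₁
  have hc₁nn : 0 ≤ c₁ := by positivity
  set c : ℕ → ℝ := fun k => if k.Prime then Real.log k / k else 0 with hc
  set f : ℝ → ℝ := fun t => (Real.log t)⁻¹ with hf
  have hNR : (3:ℝ) ≤ (N:ℝ) := by exact_mod_cast hN
  have hab : (3/2:ℝ) ≤ (N:ℝ) := by linarith
  -- basic facts about c sums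
  have hA_eq : ∀ n : ℕ, ∑ k ∈ Icc 0 n, c k = ∑ p ∈ Pb (n+1), Real.log p / p := by
    intro n
    have h : Icc 0 n = range (n+1) := by ext k; simp [Nat.lt_succ_iff]
    rw [h, Pb, Finset.sum_filter]
  have hA_nonneg : ∀ n : ℕ, 0 ≤ ∑ k ∈ Icc 0 n, c k := by
    intro n
    rw [hA_eq]
    apply Finset.sum_nonneg
    intro p hp
    simp only [Pb, mem_filter] at hp
    have h1 : (0:ℝ) ≤ Real.log p := Real.log_nonneg (by exact_mod_cast hp.2.one_lt.le)
    have h2 : (0:ℝ) < p := by exact_mod_cast hp.2.pos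
    positivity
  have hA_le : ∀ n : ℕ, 1 ≤ n → ∑ k ∈ Icc 0 n, c k ≤ Real.log n + c₁ := by
    intro n hn
    rw [hA_eq]
    exact mert1 hn
  -- derivative of f
  have hder : ∀ {t : ℝ}, (3/2:ℝ) ≤ t →
      HasDerivAt f (-(t⁻¹ / (Real.log t)^2)) t := by
    intro t ht
    have ht0 : t ≠ 0 := by linarith
    have hlt : (1:ℝ) < t := by linarith
    have hlog : Real.log t ≠ 0 := ne_of_gt (Real.log_pos hlt)
    have := (Real.hasDerivAt_log ht0).inv hlog
    rw [neg_div] at this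
    exact this
  have hderiv_eq : ∀ t ∈ Set.Icc (3/2:ℝ) (N:ℝ), deriv f t = -(t⁻¹ / (Real.log t)^2) :=
    fun t ht => (hder ht.1).deriv
  have hf_diff : ∀ t ∈ Set.Icc (3/2:ℝ) (N:ℝ), DifferentiableAt ℝ f t :=
    fun t ht => (hder ht.1).differentiableAt
  have hsub0 : Set.Icc (3/2:ℝ) (N:ℝ) ⊆ {(0:ℝ)}ᶜ := by
    intro t ht
    simp only [Set.mem_compl_iff, Set.mem_singleton_iff]
    have := ht.1
    intro h
    rw [h] at this
    norm_num at this
  have hne : ∀ t ∈ Set.Icc (3/2:ℝ) (N:ℝ), (Real.log t)^2 ≠ 0 := by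
    intro t ht
    have h1 : (1:ℝ) < t := by have := ht.1; linarith
    exact pow_ne_zero _ (ne_of_gt (Real.log_pos h1))
  have hlogcont : ContinuousOn Real.log (Set.Icc (3/2:ℝ) (N:ℝ)) :=
    Real.continuousOn_log.mono hsub0
  have hcontaux : ContinuousOn (fun t : ℝ => -(t⁻¹ / (Real.log t)^2))
      (Set.Icc (3/2:ℝ) (N:ℝ)) :=
    ((continuousOn_inv₀.mono hsub0).div (hlogcont.pow 2) hne).neg
  have hf_int : MeasureTheory.IntegrableOn (deriv f) (Set.Icc (3/2:ℝ) (N:ℝ)) := by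
    apply MeasureTheory.IntegrableOn.congr_fun _ (fun t ht => (hderiv_eq t ht).symm)
      measurableSet_Icc
    exact hcontaux.integrableOn_Icc
  -- Abel summation
  have habel := sum_mul_eq_sub_sub_integral_mul c (by norm_num : (0:ℝ) ≤ 3/2) hab hf_diff hf_int
  have hfl32 : ⌊(3/2:ℝ)⌋₊ = 1 := by norm_num [Nat.floor_eq_iff]
  have hflN : ⌊(N:ℝ)⌋₊ = N := Nat.floor_natCast N
  rw [hfl32, hflN] at habel
  -- A 1 = 0
  have hA1 : ∑ k ∈ Icc 0 1, c k = 0 := by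
    have : Icc 0 1 = ({0, 1} : Finset ℕ) := by decide
    rw [this]
    simp [hc, Nat.not_prime_zero, Nat.not_prime_one]
  rw [hA1, mul_zero, sub_zero] at habel
  -- LHS is sum of 1/p
  have hlhs : ∑ k ∈ Ioc 1 N, f ↑k * c k = ∑ p ∈ Pb (N+1), (1:ℝ)/p := by
    have h1 : ∀ k ∈ Ioc 1 N, f ↑k * c k = if k.Prime then (1:ℝ)/k else 0 := by
      intro k hk
      simp only [mem_Ioc] at hk
      by_cases hkp : k.Prime
      · have hk2 : (1:ℝ) < k := by exact_mod_cast hk.1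
        have hlog : Real.log k ≠ 0 := ne_of_gt (Real.log_pos hk2)
        simp only [hf, hc, if_pos hkp]
        field_simp
      · simp [hc, hkp]
    rw [Finset.sum_congr rfl h1, ← Finset.sum_filter]
    apply Finset.sum_congr _ (fun _ _ => rfl)
    ext k
    simp only [Pb, mem_filter, mem_Ioc, mem_range, Nat.lt_succ_iff]
    constructor
    · rintro ⟨⟨h1, h2⟩, h3⟩; exact ⟨h2, h3⟩
    · rintro ⟨h1, h2⟩; exact ⟨⟨h2.one_lt, h1⟩, h2⟩
  rw [hlhs] at habel
  -- the majorant g and its antiderivative G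
  set g : ℝ → ℝ := fun t => (Real.log t + c₁) / (t * (Real.log t)^2) with hgdef
  have hne' : ∀ t ∈ Set.Icc (3/2:ℝ) (N:ℝ), t * (Real.log t)^2 ≠ 0 := by
    intro t ht
    have h1 : (0:ℝ) < t := by have := ht.1; linarith
    exact mul_ne_zero h1.ne' (hne t ht)
  have hgcont : ContinuousOn g (Set.Icc (3/2:ℝ) (N:ℝ)) :=
    (hlogcont.add continuousOn_const).div
      (continuousOn_id.mul (hlogcont.pow 2)) hne'
  have hgint : MeasureTheory.IntegrableOn g (Set.Ioc (3/2:ℝ) (N:ℝ)) :=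
    (hgcont.integrableOn_Icc).mono_set Set.Ioc_subset_Icc_self
  -- bound the integral term
  have hbound : ‖∫ t in Set.Ioc (3/2:ℝ) (N:ℝ), deriv f t * ∑ k ∈ Icc 0 ⌊t⌋₊, c k‖
      ≤ ∫ t in Set.Ioc (3/2:ℝ) (N:ℝ), g t := by
    apply MeasureTheory.norm_integral_le_of_norm_le hgint
    rw [MeasureTheory.ae_restrict_iff' measurableSet_Ioc]
    filter_upwards with t ht
    have htIcc : t ∈ Set.Icc (3/2:ℝ) (N:ℝ) := ⟨le_of_lt ht.1, ht.2⟩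
    have h32 : (3/2:ℝ) ≤ t := htIcc.1
    have htpos : (0:ℝ) < t := by linarith
    have hlogpos : (0:ℝ) < Real.log t := Real.log_pos (by linarith)
    have hAnn := hA_nonneg ⌊t⌋₊
    rw [hderiv_eq t htIcc, norm_mul, Real.norm_eq_abs, Real.norm_eq_abs, abs_neg,
      abs_of_nonneg (by positivity), abs_of_nonneg hAnn]
    have hfl1 : 1 ≤ ⌊t⌋₊ := Nat.le_floor (by exact_mod_cast (by linarith : (1:ℝ) ≤ t))
    have hflpos : (0:ℝ) < (⌊t⌋₊ : ℝ) := by exact_mod_cast hfl1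
    have hAle : ∑ k ∈ Icc 0 ⌊t⌋₊, c k ≤ Real.log t + c₁ := by
      refine (hA_le _ hfl1).trans ?_
      have : Real.log (⌊t⌋₊ : ℝ) ≤ Real.log t :=
        Real.log_le_log hflpos (Nat.floor_le htpos.le)
      linarith
    calc t⁻¹ / Real.log t ^ 2 * ∑ k ∈ Icc 0 ⌊t⌋₊, c k
        ≤ t⁻¹ / Real.log t ^ 2 * (Real.log t + c₁) :=
          mul_le_mul_of_nonneg_left hAle (by positivity)
      _ = g t := by
          simp only [hgdef]
          field_simp
  -- compute the integral of g by FTC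
  set G : ℝ → ℝ := fun t => Real.log (Real.log t) - c₁ * (Real.log t)⁻¹ with hGdef
  have hGderiv : ∀ t ∈ Set.uIcc (3/2:ℝ) (N:ℝ), HasDerivAt G (g t) t := by
    intro t ht
    rw [Set.uIcc_of_le hab] at ht
    have h32 : (3/2:ℝ) ≤ t := ht.1
    have htpos : (0:ℝ) < t := by linarith
    have hlogpos : (0:ℝ) < Real.log t := Real.log_pos (by linarith)
    have htne : t ≠ 0 := htpos.ne'
    have hlogne : Real.log t ≠ 0 := hlogpos.ne'
    have h1 : HasDerivAt (fun u : ℝ => Real.log (Real.log u)) ((Real.log t)⁻¹ * t⁻¹) t :=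
      (Real.hasDerivAt_log hlogne).comp t (Real.hasDerivAt_log htne)
    have h2 : HasDerivAt (fun u : ℝ => (Real.log u)⁻¹) (-t⁻¹ / (Real.log t)^2) t :=
      (Real.hasDerivAt_log htne).inv hlogne
    have h3 : HasDerivAt (fun u : ℝ => Real.log (Real.log u) - c₁ * (Real.log u)⁻¹)
        ((Real.log t)⁻¹ * t⁻¹ - c₁ * (-t⁻¹ / (Real.log t)^2)) t := h1.sub (h2.const_mul c₁)
    convert h3 using 1
    simp only [hgdef]
    field_simp
    ring
  have hgII : IntervalIntegrable g MeasureTheory.volume (3/2:ℝ) (N:ℝ) :=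
    ContinuousOn.intervalIntegrable (by rwa [Set.uIcc_of_le hab])
  have hFTC : ∫ t in (3/2:ℝ)..(N:ℝ), g t = G (N:ℝ) - G (3/2:ℝ) :=
    intervalIntegral.integral_eq_sub_of_hasDerivAt hGderiv hgII
  have hInt_eq : ∫ t in Set.Ioc (3/2:ℝ) (N:ℝ), g t = G (N:ℝ) - G (3/2:ℝ) := by
    rw [← intervalIntegral.integral_of_le hab, hFTC]
  -- put everything together
  have hlogN3 : Real.log 3 ≤ Real.log (N:ℝ) := Real.log_le_log (by norm_num) hNR
  have hlog3pos : (0:ℝ) < Real.log 3 := Real.log_pos (by norm_num)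
  have hlogNpos : (0:ℝ) < Real.log (N:ℝ) := lt_of_lt_of_le hlog3pos hlogN3
  have hterm1 : f (N:ℝ) * ∑ k ∈ Icc 0 N, c k ≤ 1 + c₁ * (Real.log 3)⁻¹ := by
    have hAN : ∑ k ∈ Icc 0 N, c k ≤ Real.log (N:ℝ) + c₁ := by
      have := hA_le N (by omega)
      simpa using this
    have hfN : f (N:ℝ) = (Real.log (N:ℝ))⁻¹ := rfl
    rw [hfN]
    calc (Real.log (N:ℝ))⁻¹ * ∑ k ∈ Icc 0 N, c k
        ≤ (Real.log (N:ℝ))⁻¹ * (Real.log (N:ℝ) + c₁) :=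
          mul_le_mul_of_nonneg_left hAN (by positivity)
      _ = 1 + c₁ * (Real.log (N:ℝ))⁻¹ := by field_simp
      _ ≤ 1 + c₁ * (Real.log 3)⁻¹ := by
          have : (Real.log (N:ℝ))⁻¹ ≤ (Real.log 3)⁻¹ :=
            one_div (Real.log 3) ▸ one_div (Real.log (N:ℝ)) ▸
              one_div_le_one_div_of_le hlog3pos hlogN3
          nlinarith
  have hterm2 : G (N:ℝ) - G (3/2:ℝ) ≤ Real.log (Real.log (N:ℝ))
      + (c₁ * (Real.log (3/2))⁻¹ - Real.log (Real.log (3/2))) := by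
    simp only [hGdef]
    have h1 : 0 ≤ c₁ * (Real.log (N:ℝ))⁻¹ := by positivity
    linarith
  calc ∑ p ∈ Pb (N+1), (1:ℝ)/p
      = f (N:ℝ) * ∑ k ∈ Icc 0 N, c k
        - ∫ t in Set.Ioc (3/2:ℝ) (N:ℝ), deriv f t * ∑ k ∈ Icc 0 ⌊t⌋₊, c k := habel
    _ ≤ f (N:ℝ) * ∑ k ∈ Icc 0 N, c k
        + ‖∫ t in Set.Ioc (3/2:ℝ) (N:ℝ), deriv f t * ∑ k ∈ Icc 0 ⌊t⌋₊, c k‖ := by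
        have := neg_abs_le (∫ t in Set.Ioc (3/2:ℝ) (N:ℝ),
          deriv f t * ∑ k ∈ Icc 0 ⌊t⌋₊, c k)
        rw [Real.norm_eq_abs]
        linarith
    _ ≤ (1 + c₁ * (Real.log 3)⁻¹) + (Real.log (Real.log (N:ℝ))
        + (c₁ * (Real.log (3/2))⁻¹ - Real.log (Real.log (3/2)))) := by
        have h2 := hbound.trans (le_of_eq hInt_eq) |>.trans hterm2
        linarith [hterm1]
    _ = Real.log (Real.log (N:ℝ)) + mertB := by rw [mertB, hc₁]; ring
/-- If `R > 0`, `|z| ≤ R`, `Re s ≥ 1` and `y ≥ 3`, then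
`|∏_{p<y} (1 + (z-1)/p^s)| ≪_R (log y)^{|z-1|}`. -/
theorem stmt_3 (R : ℝ) (hR : 0 < R) :
    ∃ C : ℝ, 0 < C ∧ ∀ (z s : ℂ) (y : ℝ), ‖z‖ ≤ R → 1 ≤ s.re → 3 ≤ y →
      ‖∏ p ∈ (Finset.range ⌈y⌉₊).filter (fun p : ℕ => p.Prime ∧ (p : ℝ) < y),
          (1 + (z - 1) / (p : ℂ) ^ s)‖ ≤ C * Real.log y ^ (‖z - 1‖) := by
  refine ⟨Real.exp ((R + 1) * mertB), Real.exp_pos _, ?_⟩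
  intro z s y hz hs hy
  set r : ℝ := ‖z - 1‖ with hrdef
  have hrnn : 0 ≤ r := norm_nonneg _
  have hrR : r ≤ R + 1 := by
    calc r ≤ ‖z‖ + ‖(1:ℂ)‖ := norm_sub_le z 1
      _ ≤ R + 1 := by rw [norm_one]; linarith
  set N : ℕ := ⌊y⌋₊ with hNdef
  have hN3 : 3 ≤ N := Nat.le_floor (by exact_mod_cast hy)
  have hNy : (N:ℝ) ≤ y := Nat.floor_le (by linarith)
  have hNR3 : (3:ℝ) ≤ (N:ℝ) := by exact_mod_cast hN3
  set S : Finset ℕ := (Finset.range ⌈y⌉₊).filter (fun p : ℕ => p.Prime ∧ (p : ℝ) < y)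
    with hSdef
  -- each factor is at most 1 + r / p
  have hfac : ∀ p ∈ S, ‖1 + (z - 1) / (p : ℂ) ^ s‖ ≤ 1 + r / p := by
    intro p hp
    simp only [hSdef, mem_filter] at hp
    have hpp := hp.2.1
    have hp0 : 0 < p := hpp.pos
    have hp1 : (1:ℝ) ≤ (p:ℝ) := by exact_mod_cast hp0
    have hnorm : ‖(p:ℂ) ^ s‖ = (p:ℝ) ^ s.re := Complex.norm_natCast_cpow_of_pos hp0 s
    have hge : (p:ℝ) ≤ ‖(p:ℂ) ^ s‖ := by
      rw [hnorm]
      calc (p:ℝ) = (p:ℝ) ^ (1:ℝ) := (Real.rpow_one _).symm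
        _ ≤ (p:ℝ) ^ s.re := Real.rpow_le_rpow_of_exponent_le hp1 hs
    have hppos : (0:ℝ) < (p:ℝ) := by exact_mod_cast hp0
    calc ‖1 + (z - 1) / (p : ℂ) ^ s‖ ≤ ‖(1:ℂ)‖ + ‖(z - 1) / (p : ℂ) ^ s‖ :=
          norm_add_le _ _
      _ = 1 + r / ‖(p:ℂ) ^ s‖ := by rw [norm_one, norm_div]
      _ ≤ 1 + r / p := by
          have : r / ‖(p:ℂ) ^ s‖ ≤ r / p := by
            apply div_le_div_of_nonneg_left hrnn hppos hge
          linarith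
  -- product bound
  have hsub : S ⊆ Pb (N+1) := by
    intro p hp
    simp only [hSdef, mem_filter, mem_range] at hp
    simp only [Pb, mem_filter, mem_range, Nat.lt_succ_iff]
    exact ⟨Nat.le_floor hp.2.2.le, hp.2.1⟩
  have hchain : ‖∏ p ∈ S, (1 + (z - 1) / (p : ℂ) ^ s)‖
      ≤ Real.exp (r * ∑ p ∈ Pb (N+1), (1:ℝ)/p) := by
    rw [norm_prod]
    calc ∏ p ∈ S, ‖1 + (z - 1) / (p : ℂ) ^ s‖
        ≤ ∏ p ∈ S, (1 + r / p) :=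
          Finset.prod_le_prod (fun p _ => norm_nonneg _) hfac
      _ ≤ ∏ p ∈ S, Real.exp (r / p) := by
          apply Finset.prod_le_prod
          · intro p hp
            have := (hsub hp)
            simp only [Pb, mem_filter] at this
            have : (0:ℝ) < p := by exact_mod_cast this.2.pos
            positivity
          · intro p _
            have := Real.add_one_le_exp (r / p)
            linarith
      _ = Real.exp (∑ p ∈ S, r / p) := (Real.exp_sum _ _).symm
      _ ≤ Real.exp (∑ p ∈ Pb (N+1), r / p) := by
          apply Real.exp_le_exp.mpr
          apply Finset.sum_le_sum_of_subset_of_nonneg hsub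
          intro p hp _
          simp only [Pb, mem_filter] at hp
          have : (0:ℝ) < p := by exact_mod_cast hp.2.pos
          positivity
      _ = Real.exp (r * ∑ p ∈ Pb (N+1), (1:ℝ)/p) := by
          rw [Finset.mul_sum]
          congr 1
          exact Finset.sum_congr rfl fun p _ => by ring
  -- logs
  have hlogypos : (0:ℝ) < Real.log y := Real.log_pos (by linarith)
  have hlogNpos : (0:ℝ) < Real.log (N:ℝ) := Real.log_pos (by linarith)
  have hloglog : Real.log (Real.log (N:ℝ)) ≤ Real.log (Real.log y) :=
    Real.log_le_log hlogNpos (Real.log_le_log (by linarith) hNy)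
  calc ‖∏ p ∈ S, (1 + (z - 1) / (p : ℂ) ^ s)‖
      ≤ Real.exp (r * ∑ p ∈ Pb (N+1), (1:ℝ)/p) := hchain
    _ ≤ Real.exp (r * (Real.log (Real.log (N:ℝ)) + mertB)) := by
        apply Real.exp_le_exp.mpr
        exact mul_le_mul_of_nonneg_left (mert2 hN3) hrnn
    _ ≤ Real.exp ((R + 1) * mertB + Real.log (Real.log y) * r) := by
        apply Real.exp_le_exp.mpr
        have h1 : r * Real.log (Real.log (N:ℝ)) ≤ Real.log (Real.log y) * r := by
          rw [mul_comm (Real.log (Real.log y)) r]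
          exact mul_le_mul_of_nonneg_left hloglog hrnn
        have h2 : r * mertB ≤ (R + 1) * mertB :=
          mul_le_mul_of_nonneg_right hrR mertB_nonneg
        nlinarith [h1, h2]
    _ = Real.exp ((R + 1) * mertB) * Real.log y ^ r := by
        rw [Real.exp_add, Real.rpow_def_of_pos hlogypos]
end

section
/- For x ≥ y^h ≥ y ≥ 2 and z ∈ ℂ, the Buchstab identity S_z(x,y) = S_z(x, y^h) + (1−z) ∑_{y ≤ p < y^h} S_z(x/p, p) holds, where the sum is over primes p with y ≤ p < y^h. -/
open Finset

/-- `Sz z x y = ∑_{n ≤ x} z^{ω_y(n)}`. -/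
noncomputable def Sz (z : ℂ) (x y : ℝ) : ℂ :=
  ∑ n ∈ Finset.Icc 1 ⌊x⌋₊, z ^ omegaY y n

lemma omegaY_ceil (y : ℝ) (n : ℕ) : omegaY y n = omegaY (⌈y⌉₊ : ℝ) n := by
  unfold omegaY
  congr 1
  apply Finset.filter_congr
  intro p _
  rw [Nat.cast_lt, Nat.lt_ceil]

lemma Sz_ceil (z : ℂ) (x y : ℝ) : Sz z x y = Sz z x (⌈y⌉₊ : ℝ) := by
  unfold Sz
  exact Finset.sum_congr rfl fun n _ => by rw [omegaY_ceil]

lemma omegaY_cast (m n : ℕ) : omegaY (m : ℝ) n = (n.primeFactors.filter (· < m)).card := by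
  simp [omegaY, Nat.cast_lt]

lemma omegaY_succ (b n : ℕ) :
    omegaY ((b + 1 : ℕ) : ℝ) n =
      omegaY (b : ℝ) n + (if b.Prime ∧ b ∣ n ∧ n ≠ 0 then 1 else 0) := by
  rw [omegaY_cast, omegaY_cast]
  have hsplit : n.primeFactors.filter (· < b + 1) =
      n.primeFactors.filter (· < b) ∪ n.primeFactors.filter (· = b) := by
    rw [← Finset.filter_or]
    apply Finset.filter_congr
    intro p _
    simp [Nat.lt_succ_iff_lt_or_eq, Nat.le_iff_lt_or_eq]
  rw [hsplit, Finset.card_union_of_disjoint]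
  · congr 1
    rw [Finset.filter_eq']
    split_ifs with h1 h2 h2
    · simp
    · exact absurd (Nat.mem_primeFactors.mp h1) (by tauto)
    · exact absurd (Nat.mem_primeFactors.mpr (by tauto)) h1
    · simp
  · rw [Finset.disjoint_filter]
    intro p _ hp hq
    omega

lemma omegaY_mul_self (b m : ℕ) (hb : b.Prime) (hm : m ≠ 0) :
    omegaY (b : ℝ) (b * m) = omegaY (b : ℝ) m := by
  rw [omegaY_cast, omegaY_cast]
  congr 1
  rw [Nat.primeFactors_mul hb.ne_zero hm, Finset.filter_union, hb.primeFactors]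
  have h : ({b} : Finset ℕ).filter (· < b) = ∅ := by
    simp [Finset.filter_singleton]
  rw [h, Finset.empty_union]

lemma Sz_mul (z : ℂ) (x : ℝ) (b : ℕ) (hb : b.Prime) :
    ∑ n ∈ (Finset.Icc 1 ⌊x⌋₊).filter (fun n => b ∣ n), z ^ omegaY (b : ℝ) n
      = Sz z (x / b) (b : ℝ) := by
  have hb0 : (0 : ℝ) < b := by exact_mod_cast hb.pos
  rw [Sz]
  symm
  apply Finset.sum_nbij' (i := fun m => b * m) (j := fun n => n / b)
  · intro m hm
    simp only [Finset.mem_Icc] at hm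
    obtain ⟨h1, h2⟩ := hm
    have hfp : 0 < ⌊x / b⌋₊ := lt_of_lt_of_le h1 h2
    have hxb : (1 : ℝ) ≤ x / b := Nat.floor_pos.mp hfp
    have hmr : (m : ℝ) ≤ x / b := le_trans (by exact_mod_cast h2) (Nat.floor_le (by linarith))
    simp only [Finset.mem_filter, Finset.mem_Icc]
    refine ⟨⟨Nat.one_le_iff_ne_zero.mpr (Nat.mul_ne_zero hb.ne_zero (by omega)), ?_⟩,
      Dvd.intro m rfl⟩
    apply Nat.le_floor
    push_cast
    rw [le_div_iff₀ hb0] at hmr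
    linarith [hmr]
  · intro n hn
    simp only [Finset.mem_filter, Finset.mem_Icc] at hn
    obtain ⟨⟨h1, h2⟩, hd⟩ := hn
    obtain ⟨m, rfl⟩ := hd
    rw [Nat.mul_div_cancel_left m hb.pos]
    have hx1 : (1 : ℝ) ≤ x := Nat.floor_pos.mp (by omega)
    have hbmx : ((b * m : ℕ) : ℝ) ≤ x :=
      le_trans (Nat.cast_le.mpr h2) (Nat.floor_le (by linarith))
    simp only [Finset.mem_Icc]
    refine ⟨Nat.one_le_iff_ne_zero.mpr (by rintro rfl; simp at h1), ?_⟩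
    apply Nat.le_floor
    rw [le_div_iff₀ hb0]
    push_cast at hbmx ⊢
    linarith
  · intro m hm
    exact Nat.mul_div_cancel_left m hb.pos
  · intro n hn
    simp only [Finset.mem_filter] at hn
    exact Nat.mul_div_cancel' hn.2
  · intro m hm
    simp only [Finset.mem_Icc] at hm
    rw [omegaY_mul_self b m hb (by omega)]

lemma Sz_step (z : ℂ) (x : ℝ) (b : ℕ) :
    Sz z x ((b + 1 : ℕ) : ℝ) =
      Sz z x (b : ℝ) + (z - 1) * (if b.Prime then Sz z (x / b) (b : ℝ) else 0) := by
  by_cases hb : b.Prime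
  · simp only [hb, if_true]
    rw [← Sz_mul z x b hb]
    unfold Sz
    have key : ∀ n ∈ Finset.Icc 1 ⌊x⌋₊,
        z ^ omegaY ((b + 1 : ℕ) : ℝ) n =
          z ^ omegaY (b : ℝ) n +
            (if b ∣ n then (z - 1) * z ^ omegaY (b : ℝ) n else 0) := by
      intro n hn
      simp only [Finset.mem_Icc] at hn
      have hn0 : n ≠ 0 := by omega
      rw [omegaY_succ]
      by_cases hd : b ∣ n
      · simp only [hb, hd, hn0, and_self, if_true, ne_eq, not_false_eq_true, true_and]
        rw [pow_succ]
        ring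
      · simp [hd]
    rw [Finset.sum_congr rfl key, Finset.sum_add_distrib, ← Finset.sum_filter,
      Finset.mul_sum]
  · simp only [hb, if_false, mul_zero, add_zero]
    unfold Sz
    apply Finset.sum_congr rfl
    intro n hn
    rw [omegaY_succ]
    simp [hb]

lemma Sz_telescope (z : ℂ) (x : ℝ) (a : ℕ) :
    ∀ b : ℕ, a ≤ b →
      Sz z x (b : ℝ) = Sz z x (a : ℝ) +
        (z - 1) * ∑ p ∈ (Finset.Ico a b).filter Nat.Prime, Sz z (x / p) (p : ℝ) := by
  intro b
  induction b with
  | zero =>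
    intro hab
    interval_cases a
    simp
  | succ b ih =>
    intro hab
    rcases Nat.lt_or_ge a (b + 1) with hlt | hge
    · have hab' : a ≤ b := Nat.lt_succ_iff.mp hlt
      rw [Sz_step, ih hab']
      have hins : Finset.Ico a (b + 1) = insert b (Finset.Ico a b) := by
        ext k
        simp only [Finset.mem_Ico, Finset.mem_insert]
        omega
      rw [hins, Finset.filter_insert]
      by_cases hb : b.Prime
      · simp only [hb, if_true]
        rw [Finset.sum_insert (by simp [Finset.mem_filter])]
        ring
      · simp only [hb, if_false]
        ring
    · have : a = b + 1 := le_antisymm hab hge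
      subst this
      simp

/-- Buchstab identity: for `x ≥ y^h ≥ y ≥ 2`,
`S_z(x,y) = S_z(x, y^h) + (1-z) ∑_{y ≤ p < y^h} S_z(x/p, p)`,
the sum being over primes `p` with `y ≤ p < y^h`. -/
theorem stmt_8 (x y h : ℝ) (z : ℂ) (hy : 2 ≤ y) (hyh : y ≤ y ^ h)
    (hx : y ^ h ≤ x) :
    Sz z x y = Sz z x (y ^ h) +
      (1 - z) * ∑ p ∈ (Finset.range ⌈y ^ h⌉₊).filter
          (fun p : ℕ => p.Prime ∧ y ≤ (p : ℝ) ∧ (p : ℝ) < y ^ h),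
        Sz z (x / p) p := by
  have hab : ⌈y⌉₊ ≤ ⌈y ^ h⌉₊ := Nat.ceil_le_ceil hyh
  have htel := Sz_telescope z x ⌈y⌉₊ ⌈y ^ h⌉₊ hab
  rw [← Sz_ceil, ← Sz_ceil] at htel
  have hsets : (Finset.Ico ⌈y⌉₊ ⌈y ^ h⌉₊).filter Nat.Prime =
      (Finset.range ⌈y ^ h⌉₊).filter
        (fun p : ℕ => p.Prime ∧ y ≤ (p : ℝ) ∧ (p : ℝ) < y ^ h) := by
    ext p
    simp only [Finset.mem_filter, Finset.mem_Ico, Finset.mem_range]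
    constructor
    · rintro ⟨⟨h1, h2⟩, hp⟩
      exact ⟨h2, hp, Nat.ceil_le.mp h1, Nat.lt_ceil.mp h2⟩
    · rintro ⟨h2, hp, h3, h4⟩
      exact ⟨⟨Nat.ceil_le.mpr h3, Nat.lt_ceil.mpr h4⟩, hp⟩
  rw [hsets] at htel
  linear_combination -htel
end

section
/- The Euler product ℓ(z) = e^{(z−1)γ} ∏_p (1 + (z−1)/p)(1 − 1/p)^{z−1}, taken over all primes p, converges for every z ∈ ℂ and defines an entire function of z; moreover ℓ(z) ≠ 0 whenever z ≠ 1 and z ≠ 1 − p for every prime p. -/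
open Complex

/-- One factor of the Euler product defining `ℓ(z)`:
`(1 + (z-1)/p) · (1 - 1/p)^{z-1}` (principal branch). -/
noncomputable def ellFactor (z : ℂ) (p : Nat.Primes) : ℂ :=
  (1 + (z - 1) / (p : ℕ)) * Complex.exp ((z - 1) * Complex.log (1 - 1 / (p : ℕ)))

/-- `ℓ(z) = e^{(z-1)γ} ∏_p (1 + (z-1)/p)(1 - 1/p)^{z-1}`. -/
noncomputable def ell (z : ℂ) : ℂ :=
  Complex.exp ((z - 1) * (Real.eulerMascheroniConstant : ℂ)) * ∏' p : Nat.Primes, ellFactor z p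

/-- Logarithm of one factor. -/
noncomputable def gterm (z : ℂ) (p : Nat.Primes) : ℂ :=
  Complex.log (1 + (z - 1) / (p : ℕ)) + (z - 1) * Complex.log (1 - 1 / (p : ℕ))

lemma prime_cast_two_le (p : Nat.Primes) : (2 : ℝ) ≤ ((p : ℕ) : ℝ) := by
  exact_mod_cast p.2.two_le

lemma prime_cast_pos (p : Nat.Primes) : (0 : ℝ) < ((p : ℕ) : ℝ) := by
  linarith [prime_cast_two_le p]

lemma norm_a_eq (z : ℂ) (p : Nat.Primes) :
    ‖(z - 1) / ((p : ℕ) : ℂ)‖ = ‖z - 1‖ / ((p : ℕ) : ℝ) := by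
  rw [norm_div, Complex.norm_natCast]

lemma norm_a_le_half {z : ℂ} {r : ℝ} (hz : ‖z - 1‖ ≤ r) (p : Nat.Primes)
    (hp : 2 * r ≤ ((p : ℕ) : ℝ)) : ‖(z - 1) / ((p : ℕ) : ℂ)‖ ≤ 1 / 2 := by
  rw [norm_a_eq]
  rw [div_le_div_iff₀ (prime_cast_pos p) (by norm_num)]
  nlinarith [norm_nonneg (z - 1), prime_cast_two_le p]

lemma one_add_ne_zero {a : ℂ} (ha : ‖a‖ ≤ 1 / 2) : (1 : ℂ) + a ≠ 0 := by
  intro h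
  have : a = -1 := by linear_combination h
  rw [this] at ha
  norm_num at ha

lemma one_add_mem_slitPlane {a : ℂ} (ha : ‖a‖ ≤ 1 / 2) : (1 : ℂ) + a ∈ Complex.slitPlane := by
  rw [Complex.mem_slitPlane_iff]
  left
  have h1 : -‖a‖ ≤ a.re := neg_abs_le a.re |>.trans' (by
    have := Complex.abs_re_le_norm a
    simp only [neg_le_neg_iff]
    exact this)
  simp only [Complex.add_re, Complex.one_re]
  linarith

lemma log_est {u : ℂ} (hu : ‖u‖ ≤ 1 / 2) : ‖Complex.log (1 + u) - u‖ ≤ ‖u‖ ^ 2 := by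
  have h := Complex.norm_log_one_add_sub_self_le (lt_of_le_of_lt hu one_half_lt_one)
  have h0 : (0 : ℝ) < 1 - ‖u‖ := by linarith
  have hinv : (1 - ‖u‖)⁻¹ ≤ 2 := by
    rw [inv_le_comm₀ h0 (by norm_num)]
    linarith
  have h2 := mul_le_mul_of_nonneg_left hinv (sq_nonneg ‖u‖)
  calc ‖Complex.log (1 + u) - u‖ ≤ ‖u‖ ^ 2 * (1 - ‖u‖)⁻¹ / 2 := h
    _ ≤ ‖u‖ ^ 2 := by linarith

/-- The key estimate: `‖gterm z p‖ ≤ (r² + r)/p²` when `‖z-1‖ ≤ r` and `2r ≤ p`. -/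
lemma gterm_norm_le {z : ℂ} {r : ℝ} (hz : ‖z - 1‖ ≤ r) (p : Nat.Primes)
    (hp : 2 * r ≤ ((p : ℕ) : ℝ)) :
    ‖gterm z p‖ ≤ (r ^ 2 + r) / ((p : ℕ) : ℝ) ^ 2 := by
  have hr0 : 0 ≤ r := le_trans (norm_nonneg _) hz
  have hq2 := prime_cast_two_le p
  have hq0 := prime_cast_pos p
  set a : ℂ := (z - 1) / ((p : ℕ) : ℂ) with ha_def
  set x : ℂ := 1 / ((p : ℕ) : ℂ) with hx_def
  have hxnorm : ‖x‖ = 1 / ((p : ℕ) : ℝ) := by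
    rw [hx_def, norm_div, Complex.norm_natCast, norm_one]
  have hax : a = (z - 1) * x := by rw [ha_def, hx_def, div_eq_mul_one_div]
  have key : gterm z p = (Complex.log (1 + a) - a) + (z - 1) * (Complex.log (1 + -x) - -x) := by
    rw [gterm]
    have h1 : (1 : ℂ) - 1 / ((p : ℕ) : ℂ) = 1 + -x := by rw [hx_def]; ring
    rw [h1, show (1 : ℂ) + (z - 1) / ((p : ℕ) : ℂ) = 1 + a from rfl, hax]
    ring
  have hanorm : ‖a‖ ≤ 1 / 2 := norm_a_le_half hz p hp
  have hxhalf : ‖-x‖ ≤ 1 / 2 := by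
    rw [norm_neg, hxnorm]
    rw [div_le_div_iff₀ hq0 (by norm_num)]
    linarith
  have e1 : ‖Complex.log (1 + a) - a‖ ≤ ‖a‖ ^ 2 := log_est hanorm
  have e2 : ‖Complex.log (1 + -x) - -x‖ ≤ (1 / ((p : ℕ) : ℝ)) ^ 2 := by
    have h := log_est hxhalf
    rwa [norm_neg, hxnorm] at h
  have haq : ‖a‖ ≤ r / ((p : ℕ) : ℝ) := by
    rw [norm_a_eq]
    gcongr
  calc ‖gterm z p‖ ≤ ‖Complex.log (1 + a) - a‖ + ‖z - 1‖ * ‖Complex.log (1 + -x) - -x‖ := by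
        rw [key]
        exact (norm_add_le _ _).trans_eq (by rw [norm_mul])
    _ ≤ (r / ((p : ℕ) : ℝ)) ^ 2 + r * (1 / ((p : ℕ) : ℝ)) ^ 2 := by
        have h1 : ‖a‖ ^ 2 ≤ (r / ((p : ℕ) : ℝ)) ^ 2 := by
          apply pow_le_pow_left₀ (norm_nonneg _) haq
        have h2 := mul_le_mul hz e2 (norm_nonneg _) hr0
        linarith
    _ = (r ^ 2 + r) / ((p : ℕ) : ℝ) ^ 2 := by field_simp

lemma factor_eq_exp_gterm {z : ℂ} {p : Nat.Primes}
    (h : (1 : ℂ) + (z - 1) / ((p : ℕ) : ℂ) ≠ 0) :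
    ellFactor z p = Complex.exp (gterm z p) := by
  rw [gterm, Complex.exp_add, Complex.exp_log h, ellFactor]

lemma summable_aux (C : ℝ) : Summable (fun p : Nat.Primes => C / ((p : ℕ) : ℝ) ^ 2) := by
  have h1 : Summable (fun n : ℕ => C * (1 / (n : ℝ) ^ 2)) :=
    (Real.summable_one_div_nat_pow.mpr one_lt_two).mul_left C
  have h2 : Summable ((fun n : ℕ => C * (1 / (n : ℝ) ^ 2)) ∘ (fun p : Nat.Primes => (p : ℕ))) :=
    h1.comp_injective (fun p q h => Subtype.ext h)
  exact h2.congr (fun p => mul_one_div _ _)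

lemma finite_small_primes (r : ℝ) :
    {p : Nat.Primes | ¬ 2 * r ≤ ((p : ℕ) : ℝ)}.Finite := by
  apply Set.Finite.subset
    (Set.Finite.preimage (f := fun p : Nat.Primes => (p : ℕ))
      (Function.Injective.injOn (fun p q h => Subtype.ext h)) (Set.finite_Iic ⌈2 * r⌉₊))
  intro p hp
  simp only [Set.mem_setOf_eq, not_le] at hp
  simp only [Set.mem_preimage, Set.mem_Iic]
  have h1 : ((p : ℕ) : ℝ) < (⌈2 * r⌉₊ : ℝ) := lt_of_lt_of_le hp (Nat.le_ceil _)
  exact_mod_cast h1.le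

lemma summable_gterm (z : ℂ) : Summable (fun p : Nat.Primes => gterm z p) := by
  set r := ‖z - 1‖ with hr
  apply Summable.of_norm_bounded_eventually (g := fun p : Nat.Primes => (r ^ 2 + r) / ((p : ℕ) : ℝ) ^ 2)
    (summable_aux _)
  apply Filter.eventually_cofinite.mpr
  apply (finite_small_primes r).subset
  intro p hp
  simp only [Set.mem_setOf_eq] at hp ⊢
  intro h
  exact hp (gterm_norm_le le_rfl p h)

lemma multipliable_tail {z : ℂ} {r : ℝ} (hz : ‖z - 1‖ ≤ r) :
    HasProd (ellFactor z ∘ ((↑) : {p : Nat.Primes | 2 * r ≤ ((p : ℕ) : ℝ)} → Nat.Primes))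
      (Complex.exp
        (∑' p : {p : Nat.Primes | 2 * r ≤ ((p : ℕ) : ℝ)}, gterm z (p : Nat.Primes))) := by
  have hsum : Summable
      (fun p : {p : Nat.Primes | 2 * r ≤ ((p : ℕ) : ℝ)} => gterm z (p : Nat.Primes)) :=
    (summable_gterm z).subtype {p : Nat.Primes | 2 * r ≤ ((p : ℕ) : ℝ)}
  have h := hsum.hasSum.cexp
  apply h.congr_fun
  intro p
  show ellFactor z (p : Nat.Primes) = Complex.exp (gterm z (p : Nat.Primes))
  exact factor_eq_exp_gterm (one_add_ne_zero (norm_a_le_half hz (p : Nat.Primes) p.2))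

lemma multipliable_ellFactor (z : ℂ) : Multipliable fun p : Nat.Primes => ellFactor z p := by
  have hfin : ({p : Nat.Primes | 2 * ‖z - 1‖ ≤ ((p : ℕ) : ℝ)}ᶜ : Set Nat.Primes).Finite :=
    finite_small_primes ‖z - 1‖
  haveI : Fintype ↥({p : Nat.Primes | 2 * ‖z - 1‖ ≤ ((p : ℕ) : ℝ)}ᶜ) := hfin.fintype
  exact ((multipliable_tail le_rfl).mul_compl (hasProd_fintype _)).multipliable

lemma differentiable_ellFactor (p : Nat.Primes) : Differentiable ℂ (fun z => ellFactor z p) := by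
  apply Differentiable.mul
  · exact Differentiable.const_add (1 : ℂ) ((differentiable_id.sub_const 1).div_const _)
  · exact ((differentiable_id.sub_const 1).mul_const _).cexp

/-- The Euler product for `ℓ(z)` converges for every `z`, defines an entire
function of `z`, and `ℓ(z) ≠ 0` whenever `z ≠ 1` and `z ≠ 1 - p` for all primes `p`. -/
theorem stmt_13 :
    (∀ z : ℂ, Multipliable fun p : Nat.Primes => ellFactor z p) ∧
      Differentiable ℂ ell ∧
      ∀ z : ℂ, z ≠ 1 → (∀ p : ℕ, p.Prime → z ≠ 1 - (p : ℂ)) → ell z ≠ 0 := by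
  refine ⟨multipliable_ellFactor, ?_, ?_⟩
  · -- Differentiability
    intro z₀
    set r : ℝ := ‖z₀ - 1‖ + 1 with hr
    have hfin : ({p : Nat.Primes | 2 * r ≤ ((p : ℕ) : ℝ)}ᶜ : Set Nat.Primes).Finite :=
      finite_small_primes r
    haveI : Fintype ↥({p : Nat.Primes | 2 * r ≤ ((p : ℕ) : ℝ)}ᶜ) := hfin.fintype
    have hzr : ∀ z ∈ Metric.ball z₀ 1, ‖z - 1‖ ≤ r := by
      intro z hz
      have h1 : ‖z - 1‖ ≤ ‖z - z₀‖ + ‖z₀ - 1‖ := by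
        calc ‖z - 1‖ = ‖(z - z₀) + (z₀ - 1)‖ := by ring_nf
          _ ≤ _ := norm_add_le _ _
      rw [Metric.mem_ball, dist_eq_norm] at hz
      rw [hr]
      linarith
    have hFdiff : DifferentiableOn ℂ
        (fun z => Complex.exp ((z - 1) * (Real.eulerMascheroniConstant : ℂ)) *
          (Complex.exp (∑' p : {p : Nat.Primes | 2 * r ≤ ((p : ℕ) : ℝ)},
              gterm z (p : Nat.Primes)) *
            ∏ p : ↥({p : Nat.Primes | 2 * r ≤ ((p : ℕ) : ℝ)}ᶜ), ellFactor z (p : Nat.Primes)))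
        (Metric.ball z₀ 1) := by
      apply DifferentiableOn.mul
      · exact (((differentiable_id.sub_const 1).mul_const _).cexp).differentiableOn
      apply DifferentiableOn.mul
      · apply DifferentiableOn.cexp
        apply differentiableOn_tsum_of_summable_norm
          (u := fun p : {p : Nat.Primes | 2 * r ≤ ((p : ℕ) : ℝ)} =>
            (r ^ 2 + r) / (((p : Nat.Primes) : ℕ) : ℝ) ^ 2)
        · exact (summable_aux (r ^ 2 + r)).subtype _
        · intro p
          apply DifferentiableOn.add
          · apply DifferentiableOn.clog
            · exact (Differentiable.const_add (1 : ℂ)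
                ((differentiable_id.sub_const 1).div_const _)).differentiableOn
            · intro z hz
              exact one_add_mem_slitPlane (norm_a_le_half (hzr z hz) (p : Nat.Primes) p.2)
          · exact ((differentiable_id.sub_const 1).mul_const _).differentiableOn
        · exact Metric.isOpen_ball
        · intro p z hz
          exact gterm_norm_le (hzr z hz) (p : Nat.Primes) p.2
      · apply Differentiable.differentiableOn
        apply Differentiable.fun_finsetProd
          (f := fun (p : ↥({p : Nat.Primes | 2 * r ≤ ((p : ℕ) : ℝ)}ᶜ)) (y : ℂ) =>
            ellFactor y (p : Nat.Primes)) (u := Finset.univ)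
        intro p _
        exact differentiable_ellFactor _
    have hEq : Set.EqOn ell
        (fun z => Complex.exp ((z - 1) * (Real.eulerMascheroniConstant : ℂ)) *
          (Complex.exp (∑' p : {p : Nat.Primes | 2 * r ≤ ((p : ℕ) : ℝ)},
              gterm z (p : Nat.Primes)) *
            ∏ p : ↥({p : Nat.Primes | 2 * r ≤ ((p : ℕ) : ℝ)}ᶜ), ellFactor z (p : Nat.Primes)))
        (Metric.ball z₀ 1) := by
      intro z hz
      have h2 := hasProd_fintype
        (ellFactor z ∘ ((↑) : ↥({p : Nat.Primes | 2 * r ≤ ((p : ℕ) : ℝ)}ᶜ) → Nat.Primes))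
      have hfull := (multipliable_tail (hzr z hz)).mul_compl h2
      show ell z = _
      rw [ell, hfull.tprod_eq]
      rfl
    exact ((hFdiff.congr hEq).differentiableAt (Metric.isOpen_ball.mem_nhds (by simp)))
  · -- Nonvanishing
    intro z hz1 hzp
    have hne : ∀ p : Nat.Primes, (1 : ℂ) + (z - 1) / ((p : ℕ) : ℂ) ≠ 0 := by
      intro p h
      apply hzp p p.2
      have hp0 : ((p : ℕ) : ℂ) ≠ 0 := Nat.cast_ne_zero.mpr p.2.pos.ne'
      have h2 : (z - 1) / ((p : ℕ) : ℂ) = -1 := by linear_combination h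
      have h3 : z - 1 = -((p : ℕ) : ℂ) := by
        field_simp at h2
        linear_combination h2
      linear_combination h3
    have hp := (summable_gterm z).hasSum.cexp
    have heq : (fun p : Nat.Primes => ellFactor z p) = Complex.exp ∘ (fun p => gterm z p) :=
      funext fun p => factor_eq_exp_gterm (hne p)
    rw [← heq] at hp
    rw [ell, hp.tprod_eq]
    exact mul_ne_zero (Complex.exp_ne_zero _) (Complex.exp_ne_zero _)
end
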